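/- Let m be a positive natural number and let H be the numerical semigroup generated by m and m+1. Let e be a positive integer. If the cardinality of H \ (eH* + H) equals em (where m is the smallest nonzero element of H), then e ∈ H. -/

import Mathlib

/-- A numerical semigroup: a subset of ℕ containing 0, closed under addition,
with finite complement in ℕ. -/
def IsNumericalSemigroup (H : Set ℕ) : Prop :=
  0 ∈ H ∧ (∀ a ∈ H, ∀ b ∈ H, a + b ∈ H) ∧ (Hᶜ : Set ℕ).Finite

/-- Key counting lemma: for S ⊆ ℕ with finite complement, closed under adding n,
the set S \ (n + S) is finite with exactly n elements. -/
lemma aux_ncard (S : Set ℕ) (hfin : Sᶜ.Finite) (n : ℕ)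
    (hshift : ∀ x ∈ S, n + x ∈ S) :
    (S \ {x | ∃ h ∈ S, x = n + h}).Finite ∧
      (S \ {x | ∃ h ∈ S, x = n + h}).ncard = n := by
  set T : Set ℕ := {x | ∃ h ∈ S, x = n + h} with hT
  have hTc : Tᶜ = Set.Iio n ∪ (fun x => n + x) '' Sᶜ := by
    ext x
    simp only [Set.mem_compl_iff, hT, Set.mem_setOf_eq, Set.mem_union, Set.mem_Iio,
      Set.mem_image, Set.mem_compl_iff]
    constructor
    · intro h
      rcases lt_or_ge x n with h1 | h1
      · exact Or.inl h1
      · right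
        exact ⟨x - n, fun hs => h ⟨x - n, hs, by omega⟩, by omega⟩
    · rintro (h1 | ⟨y, hy, rfl⟩) ⟨h, hh, hx⟩
      · omega
      · have hyh : y = h := by omega
        exact hy (hyh ▸ hh)
  have hTcfin : Tᶜ.Finite := by
    rw [hTc]; exact (Set.finite_Iio n).union (hfin.image _)
  have hScT : Sᶜ ⊆ Tᶜ := by
    intro x hx hxT
    rcases hxT with ⟨h, hh, rfl⟩
    exact hx (hshift h hh)
  have hdiff : S \ T = Tᶜ \ Sᶜ := by
    ext x; simp only [Set.mem_diff, Set.mem_compl_iff, not_not]; tauto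
  have hfinB : (S \ T).Finite := hdiff ▸ hTcfin.diff
  have hIio : (Set.Iio n).ncard = n := by
    rw [← Finset.coe_Iio, Set.ncard_coe_finset]; simp
  have himg : ((fun x => n + x) '' Sᶜ).ncard = Sᶜ.ncard :=
    Set.ncard_image_of_injective _ (fun a b h => by omega)
  have hdisj : Disjoint (Set.Iio n) ((fun x => n + x) '' Sᶜ) := by
    rw [Set.disjoint_left]
    rintro x hx ⟨y, hy, rfl⟩
    simp only [Set.mem_Iio] at hx
    omega
  have hTc_card : Tᶜ.ncard = n + Sᶜ.ncard := by
    rw [hTc, Set.ncard_union_eq hdisj (Set.finite_Iio n) (hfin.image _), hIio, himg]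
  have hcard : (S \ T).ncard = n := by
    rw [hdiff, Set.ncard_diff hScT hfin, hTc_card]
    omega
  exact ⟨hfinB, hcard⟩

/-- For H = ⟨m, m+1⟩ (m positive) and a positive integer e: if
#(H \ (eH* + H)) = em, then e ∈ H. -/
theorem stmt_8 (m : ℕ) (hm : 0 < m)
    (H : Set ℕ) (hH : H = {n : ℕ | ∃ a b : ℕ, n = a * m + b * (m + 1)})
    (e : ℕ) (he : 0 < e)
    (hcard : (H \ {x | ∃ l ∈ H, l ≠ 0 ∧ ∃ mu ∈ H, x = e * l + mu}).ncard = e * m) :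
    e ∈ H := by
  have hmem : ∀ a b : ℕ, a * m + b * (m + 1) ∈ H := by
    intro a b; rw [hH]; exact ⟨a, b, rfl⟩
  have hfin : Hᶜ.Finite := by
    apply Set.Finite.subset (Set.finite_Iio (m * m))
    intro x hx
    simp only [Set.mem_compl_iff] at hx
    simp only [Set.mem_Iio]
    by_contra hge
    push_neg at hge
    apply hx
    have h1 : x % m < m := Nat.mod_lt _ hm
    have h2 : m ≤ x / m := (Nat.le_div_iff_mul_le hm).mpr (by nlinarith)
    have h3 : x % m ≤ x / m := by omega
    have h4 := Nat.div_add_mod x m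
    have : (x / m - x % m) * m + (x % m) * (m + 1) = x := by
      have : (x / m - x % m) * m + (x % m) * m = (x / m) * m := by
        rw [← Nat.add_mul, Nat.sub_add_cancel h3]
      nlinarith [this]
    rw [hH]
    exact ⟨x / m - x % m, x % m, this.symm⟩
  have hshift : ∀ x ∈ H, e * m + x ∈ H := by
    intro x hx
    rw [hH] at hx ⊢
    rcases hx with ⟨a, b, rfl⟩
    exact ⟨e + a, b, by ring⟩
  obtain ⟨hBfin, hBcard⟩ := aux_ncard H hfin (e * m) hshift
  set T : Set ℕ := {x | ∃ h ∈ H, x = e * m + h} with hT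
  set Q : Set ℕ := {x | ∃ l ∈ H, l ≠ 0 ∧ ∃ mu ∈ H, x = e * l + mu} with hQ
  have hmH : m ∈ H := by simpa using hmem 1 0
  have hsub : H \ Q ⊆ H \ T := by
    rintro x ⟨hxH, hxQ⟩
    refine ⟨hxH, fun hxT => hxQ ?_⟩
    rcases hxT with ⟨h, hh, rfl⟩
    exact ⟨m, hmH, by omega, h, hh, rfl⟩
  have hAeqB : H \ Q = H \ T := by
    apply Set.eq_of_subset_of_ncard_le hsub _ hBfin
    rw [hBcard, hcard]
  have h1 : e * (m + 1) ∈ H := by simpa using hmem 0 e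
  have h2 : e * (m + 1) ∈ Q := by
    refine ⟨m + 1, by simpa using hmem 0 1, by omega, 0, by simpa using hmem 0 0, by ring⟩
  have h3 : e * (m + 1) ∉ H \ T := by
    rw [← hAeqB]
    exact fun hc => hc.2 h2
  have h4 : e * (m + 1) ∈ T := by
    by_contra hc
    exact h3 ⟨h1, hc⟩
  rcases h4 with ⟨h, hh, hx⟩
  have : h = e := by
    have : e * (m + 1) = e * m + e := by ring
    omega
  rwa [this] at hh
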